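/- Let D(z) = Σ_{l=0}^ν p_l(z) e^{i z q_l} where 0 = q_0 < q_1 < … < q_ν, ν ≥ 1, all p_l are nonzero polynomials, deg p_0 = N, and deg p_l ≤ N − 2 for 1 ≤ l ≤ ν. Then there exist constants c₁ ≥ N/(q_ν − q_{ν−1}) and c₂ ∈ ℝ such that D has no zeros in the region { z ∈ ℂ : Im z < −c₁ · log(|Re z| + 1) − c₂ } outside a sufficiently large disk. Consequently every zero k of D with Im k ≤ 0 and |k| large satisfies Im k ≥ −c₁ · log(|Re k| + 1) − c₂. -/

import Mathlib

open Complex Real Filter Asymptotics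

-- Lemma A: polynomial upper bound
theorem polyUpper (P : Polynomial ℂ) (n : ℕ) (h : P.natDegree ≤ n) :
    ∃ C : ℝ, 1 ≤ C ∧ ∀ z : ℂ, ‖P.eval z‖ ≤ C * (1 + ‖z‖) ^ n := by
  classical
  set C₀ : ℝ := ∑ i ∈ Finset.range (P.natDegree + 1), ‖P.coeff i‖
  refine ⟨max 1 C₀, le_max_left _ _, fun z => ?_⟩
  have hz1 : (1:ℝ) ≤ 1 + ‖z‖ := by linarith [norm_nonneg z]
  have h1 : ‖P.eval z‖ ≤ C₀ * (1 + ‖z‖) ^ n := by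
    rw [Polynomial.eval_eq_sum_range]
    calc ‖∑ i ∈ Finset.range (P.natDegree + 1), P.coeff i * z ^ i‖
        ≤ ∑ i ∈ Finset.range (P.natDegree + 1), ‖P.coeff i * z ^ i‖ := norm_sum_le _ _
      _ ≤ ∑ i ∈ Finset.range (P.natDegree + 1), ‖P.coeff i‖ * (1 + ‖z‖) ^ n := by
          refine Finset.sum_le_sum fun i hi => ?_
          rw [norm_mul, norm_pow]
          refine mul_le_mul_of_nonneg_left ?_ (norm_nonneg _)
          calc ‖z‖ ^ i ≤ (1 + ‖z‖) ^ i := by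
                exact pow_le_pow_left₀ (norm_nonneg z) (by linarith) i
            _ ≤ (1 + ‖z‖) ^ n := by
                refine pow_le_pow_right₀ hz1 ?_
                have := Finset.mem_range.1 hi; omega
      _ = C₀ * (1 + ‖z‖) ^ n := by rw [Finset.sum_mul]
  refine h1.trans (mul_le_mul_of_nonneg_right (le_max_right _ _) (by positivity))

-- Lemma B: polynomial lower bound away from a big disk
theorem polyLower (P : Polynomial ℂ) (hP : P ≠ 0) :
    ∃ m : ℝ, 0 < m ∧ ∃ R : ℝ, 1 ≤ R ∧ ∀ z : ℂ, R ≤ ‖z‖ → m ≤ ‖P.eval z‖ := by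
  rcases eq_or_lt_of_le (Nat.zero_le P.natDegree) with h0 | hdeg
  · -- constant polynomial
    have hc : P = Polynomial.C (P.coeff 0) := Polynomial.eq_C_of_natDegree_eq_zero h0.symm
    have hc0 : P.coeff 0 ≠ 0 := by
      intro h; apply hP; rw [hc, h, map_zero]
    refine ⟨‖P.coeff 0‖, norm_pos_iff.2 hc0, 1, le_refl _, fun z _ => ?_⟩
    conv_rhs => rw [hc]
    simp
  · have hdeg' : 0 < P.degree := by
      rwa [Polynomial.natDegree_pos_iff_degree_pos] at hdeg
    have ht : Tendsto (fun z : ℂ => ‖z‖) (Filter.comap (fun z : ℂ => ‖z‖) atTop) atTop :=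
      tendsto_comap
    have := (P.tendsto_norm_atTop hdeg' ht).eventually_ge_atTop 1
    rw [Filter.eventually_comap] at this
    rw [Filter.eventually_atTop] at this
    obtain ⟨R, hR⟩ := this
    refine ⟨1, one_pos, max R 1, le_max_right _ _, fun z hz => ?_⟩
    exact hR ‖z‖ (le_trans (le_max_left _ _) hz) z rfl

-- Lemma C: exponential beats polynomial
theorem expBeats (N : ℕ) (a K : ℝ) (ha : 0 < a) :
    ∃ T : ℝ, 0 ≤ T ∧ ∀ t : ℝ, T ≤ t → K * (1 + t) ^ N ≤ Real.exp (a * t) := by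
  have h1 : (fun t : ℝ => (a * t) ^ N) =o[atTop] (fun t : ℝ => Real.exp (a * t)) :=
    Real.isLittleO_pow_exp_atTop.comp_tendsto (tendsto_id.const_mul_atTop ha)
  have h2 : (fun t : ℝ => K * (1 + t) ^ N) =O[atTop] (fun t : ℝ => (a * t) ^ N) := by
    refine IsBigO.of_bound (|K| * (2 / a) ^ N) ?_
    filter_upwards [eventually_ge_atTop (1:ℝ)] with t ht
    have ht0 : (0:ℝ) < t := by linarith
    have h12 : 1 + t ≤ 2 * t := by linarith
    rw [norm_mul, norm_pow, norm_pow, Real.norm_eq_abs, Real.norm_eq_abs, Real.norm_eq_abs]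
    rw [_root_.abs_of_nonneg (by linarith : (0:ℝ) ≤ 1 + t), _root_.abs_of_nonneg (by positivity : (0:ℝ) ≤ a * t)]
    have : (1 + t) ^ N ≤ (2 / a) ^ N * (a * t) ^ N := by
      rw [← mul_pow]
      refine pow_le_pow_left₀ (by linarith) ?_ N
      have he : 2 / a * (a * t) = 2 * t := by field_simp
      linarith
    calc |K| * (1 + t) ^ N ≤ |K| * ((2 / a) ^ N * (a * t) ^ N) :=
          mul_le_mul_of_nonneg_left this (abs_nonneg K)
      _ = |K| * (2 / a) ^ N * (a * t) ^ N := by ring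
  have h3 := (h2.trans_isLittleO h1).bound one_pos
  rw [Filter.eventually_atTop] at h3
  obtain ⟨T, hT⟩ := h3
  refine ⟨max T 0, le_max_right _ _, fun t ht => ?_⟩
  have := hT t (le_trans (le_max_left _ _) ht)
  have h4 : K * (1 + t) ^ N ≤ ‖K * (1 + t) ^ N‖ := le_abs_self _
  calc K * (1 + t) ^ N ≤ ‖K * (1 + t) ^ N‖ := h4
    _ ≤ 1 * ‖Real.exp (a * t)‖ := this
    _ = Real.exp (a * t) := by rw [one_mul, Real.norm_eq_abs, abs_of_pos (Real.exp_pos _)]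
theorem stmt2 (N ν : ℕ) (hν : 1 ≤ ν)
    (q : Fin (ν + 1) → ℝ) (hq0 : q 0 = 0) (hq : StrictMono q)
    (p : Fin (ν + 1) → Polynomial ℂ)
    (hpne : ∀ l, p l ≠ 0)
    (hp0 : (p 0).natDegree = N)
    (hpl : ∀ l : Fin (ν + 1), l ≠ 0 → (p l).natDegree ≤ N - 2) :
    ∃ c₁ : ℝ, (N : ℝ) / (q (Fin.last ν) - q ⟨ν - 1, by omega⟩) ≤ c₁ ∧
    ∃ c₂ : ℝ, ∃ r > (0:ℝ),
      (∀ z : ℂ, r ≤ ‖z‖ →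
        z.im < -c₁ * Real.log (|z.re| + 1) - c₂ →
        (∑ l, (p l).eval z * Complex.exp (Complex.I * z * (q l : ℂ))) ≠ 0) ∧
      (∀ k : ℂ, r ≤ ‖k‖ →
        (∑ l, (p l).eval k * Complex.exp (Complex.I * k * (q l : ℂ))) = 0 →
        k.im ≤ 0 →
        -c₁ * Real.log (|k.re| + 1) - c₂ ≤ k.im) := by
  classical
  set L : Fin (ν + 1) := Fin.last ν with hL
  set J : Fin (ν + 1) := ⟨ν - 1, by omega⟩ with hJ
  have hJL : J < L := by simp only [hL, hJ, Fin.lt_def, Fin.val_last]; omega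
  set δ : ℝ := q L - q J with hδdef
  have hδ : 0 < δ := sub_pos.2 (hq hJL)
  have hqnn : ∀ l, 0 ≤ q l := fun l => hq0 ▸ hq.monotone (Fin.zero_le l)
  have hqJle : ∀ l : Fin (ν + 1), l ≠ L → q l ≤ q J := by
    intro l hl
    refine hq.monotone ?_
    have hv : l.val ≠ ν := by
      intro h; exact hl (Fin.ext (by simp [hL, h]))
    have := l.isLt
    simp only [hJ, Fin.le_def]
    omega
  have hdeg : ∀ l, (p l).natDegree ≤ N := by
    intro l
    by_cases h : l = 0
    · rw [h, hp0]
    · exact le_trans (hpl l h) (Nat.sub_le N 2)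
  choose Cf hCf1 hCf using fun l => polyUpper (p l) N (hdeg l)
  set C : ℝ := ∑ l, Cf l with hCdef
  have hCl' : ∀ l, Cf l ≤ C :=
    fun l => Finset.single_le_sum (f := Cf)
      (fun i _ => le_trans zero_le_one (hCf1 i)) (Finset.mem_univ l)
  have hC0 : 0 < C := lt_of_lt_of_le one_pos (le_trans (hCf1 L) (hCl' L))
  obtain ⟨m, hm, R₀, hR₀, hmlow⟩ := polyLower (p L) (hpne L)
  obtain ⟨T, hT0, hTprop⟩ := expBeats N (δ / 2) (((ν : ℝ) + 1) * C / m) (by positivity)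
  have hc₁nn : (0:ℝ) ≤ 2 * N / δ := by positivity
  have main : ∀ z : ℂ, R₀ ≤ ‖z‖ →
      z.im < -(2 * N / δ) * Real.log (|z.re| + 1) - T →
      (∑ l, (p l).eval z * Complex.exp (Complex.I * z * (q l : ℂ))) ≠ 0 := by
    intro z hz hreg h0
    set f : Fin (ν + 1) → ℂ :=
      fun l => (p l).eval z * Complex.exp (Complex.I * z * (q l : ℂ)) with hf
    set t : ℝ := -z.im with htdef
    set x : ℝ := |z.re| with hxdef
    have hx0 : 0 ≤ x := abs_nonneg _
    have hlog : 0 ≤ Real.log (x + 1) := Real.log_nonneg (by linarith)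
    have ht1 : (2 * N / δ) * Real.log (x + 1) + T < t := by
      simp only [htdef]; linarith [hreg]
    have hmulnn : 0 ≤ (2 * N / δ) * Real.log (x + 1) := mul_nonneg hc₁nn hlog
    have htT : T ≤ t := by linarith
    have ht0 : 0 < t := by linarith
    have hnorm : ∀ l, ‖f l‖ = ‖(p l).eval z‖ * Real.exp (q l * t) := by
      intro l
      rw [hf, norm_mul, Complex.norm_exp]
      congr 2
      simp [Complex.mul_re, Complex.mul_im, htdef]
      ring
    -- upper bound for non-top terms
    have hub : ∀ l ∈ Finset.univ.erase L, ‖f l‖ ≤ C * (1 + ‖z‖) ^ N * Real.exp (q J * t) := by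
      intro l hl
      have hlne := (Finset.mem_erase.1 hl).1
      rw [hnorm l]
      have h1 : ‖(p l).eval z‖ ≤ C * (1 + ‖z‖) ^ N :=
        le_trans (hCf l z) (mul_le_mul_of_nonneg_right (hCl' l) (by positivity))
      have h2 : Real.exp (q l * t) ≤ Real.exp (q J * t) :=
        Real.exp_le_exp.2 (mul_le_mul_of_nonneg_right (hqJle l hlne) ht0.le)
      exact mul_le_mul h1 h2 (Real.exp_pos _).le (by positivity)
    have hcard : (Finset.univ.erase L).card = ν := by
      rw [Finset.card_erase_of_mem (Finset.mem_univ L)]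
      simp
    have hsum_ub : ‖∑ l ∈ Finset.univ.erase L, f l‖ ≤
        (ν : ℝ) * (C * (1 + ‖z‖) ^ N * Real.exp (q J * t)) := by
      calc ‖∑ l ∈ Finset.univ.erase L, f l‖
          ≤ ∑ l ∈ Finset.univ.erase L, ‖f l‖ := norm_sum_le _ _
        _ ≤ (Finset.univ.erase L).card • (C * (1 + ‖z‖) ^ N * Real.exp (q J * t)) :=
            Finset.sum_le_card_nsmul _ _ _ hub
        _ = (ν : ℝ) * (C * (1 + ‖z‖) ^ N * Real.exp (q J * t)) := by
            rw [hcard, nsmul_eq_mul]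
    -- key comparison
    have hz_le : ‖z‖ ≤ x + t := by
      have him : |z.im| = t := by rw [_root_.abs_of_neg (by linarith : z.im < 0)]
      calc ‖z‖ = ‖z‖ := rfl
        _ ≤ |z.re| + |z.im| := Complex.norm_le_abs_re_add_abs_im z
        _ = x + t := by rw [him, hxdef]
    have h1z : (1 + ‖z‖) ^ N ≤ (1 + x) ^ N * (1 + t) ^ N := by
      rw [← mul_pow]
      refine pow_le_pow_left₀ (by positivity) ?_ N
      nlinarith [hz_le, hx0, ht0]
    have hA : ((ν : ℝ) + 1) * C * (1 + t) ^ N ≤ m * Real.exp (δ / 2 * t) := by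
      have h := hTprop t htT
      rw [div_mul_eq_mul_div, div_le_iff₀ hm] at h
      nlinarith [h]
    have hB : (1 + x) ^ N < Real.exp (δ / 2 * t) := by
      have hkey : (N : ℝ) * Real.log (1 + x) < δ / 2 * t := by
        have h2 : 2 * N / δ * Real.log (x + 1) < t := by linarith
        have h3 := mul_lt_mul_of_pos_left h2 (by linarith : (0:ℝ) < δ / 2)
        have he : δ / 2 * (2 * N / δ * Real.log (x + 1)) = (N : ℝ) * Real.log (x + 1) := by
          field_simp
        rw [he] at h3
        rw [add_comm 1 x]
        exact h3
      calc (1 + x) ^ N = Real.exp ((N : ℝ) * Real.log (1 + x)) := by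
            rw [Real.exp_nat_mul, Real.exp_log (by linarith)]
        _ < Real.exp (δ / 2 * t) := Real.exp_lt_exp.2 hkey
    have hE : (ν : ℝ) * (C * (1 + ‖z‖) ^ N) < m * Real.exp (δ * t) := by
      have step1 : (ν : ℝ) * (C * (1 + ‖z‖) ^ N) ≤
          ((ν : ℝ) + 1) * C * (1 + t) ^ N * (1 + x) ^ N := by
        calc (ν : ℝ) * (C * (1 + ‖z‖) ^ N)
            ≤ ((ν : ℝ) + 1) * (C * ((1 + x) ^ N * (1 + t) ^ N)) :=
              mul_le_mul (by linarith) (mul_le_mul_of_nonneg_left h1z hC0.le)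
                (by positivity) (by positivity)
          _ = ((ν : ℝ) + 1) * C * (1 + t) ^ N * (1 + x) ^ N := by ring
      have step2 : ((ν : ℝ) + 1) * C * (1 + t) ^ N * (1 + x) ^ N <
          m * Real.exp (δ / 2 * t) * Real.exp (δ / 2 * t) :=
        mul_lt_mul' hA hB (by positivity) (by positivity)
      have step3 : m * Real.exp (δ / 2 * t) * Real.exp (δ / 2 * t) = m * Real.exp (δ * t) := by
        rw [mul_assoc, ← Real.exp_add]; ring_nf
      linarith [step1, step2, step3.le, step3.ge]
    have key : (ν : ℝ) * (C * (1 + ‖z‖) ^ N * Real.exp (q J * t)) < m * Real.exp (q L * t) := by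
      have hqL : q L * t = q J * t + δ * t := by rw [hδdef]; ring
      rw [hqL, Real.exp_add]
      calc (ν : ℝ) * (C * (1 + ‖z‖) ^ N * Real.exp (q J * t))
          = (ν : ℝ) * (C * (1 + ‖z‖) ^ N) * Real.exp (q J * t) := by ring
        _ < m * Real.exp (δ * t) * Real.exp (q J * t) :=
            mul_lt_mul_of_pos_right hE (Real.exp_pos _)
        _ = m * (Real.exp (q J * t) * Real.exp (δ * t)) := by ring
    have hflow : m * Real.exp (q L * t) ≤ ‖f L‖ := by
      rw [hnorm L]
      exact mul_le_mul_of_nonneg_right (hmlow z hz) (Real.exp_pos _).le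
    -- contradiction
    have hsum : f L + ∑ l ∈ Finset.univ.erase L, f l = ∑ l, f l :=
      Finset.add_sum_erase _ f (Finset.mem_univ L)
    have hfL : f L = -∑ l ∈ Finset.univ.erase L, f l := by
      have : f L + ∑ l ∈ Finset.univ.erase L, f l = 0 := by rw [hsum]; exact h0
      linear_combination this
    have : ‖f L‖ = ‖∑ l ∈ Finset.univ.erase L, f l‖ := by rw [hfL, norm_neg]
    linarith [hsum_ub, key, hflow, this.le, this.ge]
  refine ⟨2 * N / δ, ?_, T, R₀, lt_of_lt_of_le one_pos hR₀, main, ?_⟩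
  · show (N : ℝ) / δ ≤ 2 * N / δ
    have hN : (0:ℝ) ≤ N := Nat.cast_nonneg N
    rw [div_le_div_iff₀ hδ hδ]
    nlinarith
  · intro k hk hDk him
    by_contra hcon
    exact main k hk (lt_of_not_ge hcon) hDk
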